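/- Let R ⊆ (Fin r → Bool) be a nonempty Boolean relation that contains neither the all-false tuple nor the all-true tuple. Then there exists a map f : Fin r → Fin 2 such that the induced binary relation R₂ := {(a, b) : Bool × Bool | (fun i => if f i = 0 then a else b) ∈ R} contains (true, false) but contains neither (false, false) nor (true, true); consequently R₂ is either {(true,false)} or {(true,false),(false,true)}, i.e., the identification of variables yields either the constraint (x = 1 ∧ y = 0) or the disequality constraint (x ≠ y). -/
import Mathlib


theorem stmt_18 {r : ℕ} (R : Set (Fin r → Bool)) (hne : R.Nonempty)
    (h0 : (fun _ => false : Fin r → Bool) ∉ R)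
    (h1 : (fun _ => true : Fin r → Bool) ∉ R) :
    ∃ f : Fin r → Fin 2,
      ∀ R2 : Set (Bool × Bool),
        R2 = {ab : Bool × Bool | (fun i => if f i = 0 then ab.1 else ab.2) ∈ R} →
        ((true, false) ∈ R2 ∧ (false, false) ∉ R2 ∧ (true, true) ∉ R2 ∧
          (R2 = {(true, false)} ∨ R2 = {(true, false), (false, true)})) := by
  obtain ⟨g, hg⟩ := hne
  refine ⟨fun i => if g i then 0 else 1, ?_⟩
  rintro R2 rfl
  have htf : ((true, false) : Bool × Bool) ∈
      {ab : Bool × Bool | (fun i => if (if g i then (0:Fin 2) else 1) = 0 then ab.1 else ab.2) ∈ R} := by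
    simp only [Set.mem_setOf_eq]
    convert hg using 1
    funext i
    cases h : g i <;> simp [h]
  have hff : ((false, false) : Bool × Bool) ∉
      {ab : Bool × Bool | (fun i => if (if g i then (0:Fin 2) else 1) = 0 then ab.1 else ab.2) ∈ R} := by
    simp only [Set.mem_setOf_eq]
    convert h0 using 2
    funext i; split <;> rfl
  have htt : ((true, true) : Bool × Bool) ∉
      {ab : Bool × Bool | (fun i => if (if g i then (0:Fin 2) else 1) = 0 then ab.1 else ab.2) ∈ R} := by
    simp only [Set.mem_setOf_eq]
    convert h1 using 2
    funext i; split <;> rfl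
  refine ⟨htf, hff, htt, ?_⟩
  by_cases hft : ((false, true) : Bool × Bool) ∈
      {ab : Bool × Bool | (fun i => if (if g i then (0:Fin 2) else 1) = 0 then ab.1 else ab.2) ∈ R}
  · right
    ext ⟨a, b⟩
    cases a <;> cases b <;> simp_all
  · left
    ext ⟨a, b⟩
    cases a <;> cases b <;> simp_all
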